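/- In-context learning error bound: extend the meta-learning setup to M+1 documents, i.e. ψ, θ_1,…,θ_{M+1}, and D_1,…,D_{M+1} with D_m = (X^{(m)}_1,…,X^{(m)}_T), such that conditioned on ψ the pairs (θ_m, D_m), m = 1,…,M+1, are i.i.d., and I[D_m ; ψ | θ_m] = 0 for every m. For 1 ≤ τ ≤ T write W = (X^{(M+1)}_1,…,X^{(M+1)}_τ) for the in-context sequence and H_{M+1,t} = (D_1,…,D_M, X^{(M+1)}_1,…,X^{(M+1)}_t). Then the optimal in-context average log-loss satisfies (1/τ) Σ_{t=0}^{τ−1} H[X^{(M+1)}_{t+1} | H_{M+1,t}] ≤ H[W | θ_{M+1}]/τ + I[(D_1,…,D_M) ; ψ]/(Mτ) + I[W ; θ_{M+1} | ψ]/τ. (Paper: Theorem 'in context learning error bound'.) -/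

import Mathlib

open MeasureTheory ProbabilityTheory Real

variable {Ω : Type*} [MeasureSpace Ω]

noncomputable def prob {𝒳 : Type*} (X : Ω → 𝒳) (x : 𝒳) : ℝ :=
  (ℙ (X ⁻¹' {x})).toReal

noncomputable def entropy {𝒳 : Type*} [Fintype 𝒳] (X : Ω → 𝒳) : ℝ :=
  -∑ x, prob X x * Real.log (prob X x)

noncomputable def condEntropy {𝒳 𝒴 : Type*} [Fintype 𝒳] [Fintype 𝒴]
    (X : Ω → 𝒳) (Y : Ω → 𝒴) : ℝ :=
  entropy (fun ω => (X ω, Y ω)) - entropy Y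

noncomputable def mutualInfo {𝒳 𝒴 : Type*} [Fintype 𝒳] [Fintype 𝒴]
    (X : Ω → 𝒳) (Y : Ω → 𝒴) : ℝ :=
  entropy X + entropy Y - entropy (fun ω => (X ω, Y ω))

noncomputable def condMutualInfo {𝒳 𝒴 𝒵 : Type*} [Fintype 𝒳] [Fintype 𝒴] [Fintype 𝒵]
    (X : Ω → 𝒳) (Y : Ω → 𝒴) (Z : Ω → 𝒵) : ℝ :=
  entropy (fun ω => (X ω, Z ω)) + entropy (fun ω => (Y ω, Z ω))
    - entropy (fun ω => (X ω, Y ω, Z ω)) - entropy Z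

def hist {𝒳 : Type*} {T : ℕ} (X : Fin T → Ω → 𝒳) (t : ℕ) (ht : t ≤ T) : Ω → (Fin t → 𝒳) :=
  fun ω i => X (Fin.castLE ht i) ω



/-! ### Auxiliary toolkit -/

section Toolkit

lemma prob_nonneg' {α : Type*} (X : Ω → α) (x : α) : 0 ≤ prob X x := ENNReal.toReal_nonneg

lemma entropy_ext' {α : Type*} [Fintype α] {A B : Ω → α} (h : ∀ ω, A ω = B ω) :
    entropy A = entropy B := by rw [funext h]

lemma prob_comp_of_not_mem_range' {α β : Type*} {A : Ω → α} (f : α → β) {y : β}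
    (hy : y ∉ Set.range f) : prob (fun ω => f (A ω)) y = 0 := by
  have : (fun ω => f (A ω)) ⁻¹' {y} = ∅ := by
    ext ω
    simp only [Set.mem_preimage, Set.mem_singleton_iff, Set.mem_empty_iff_false, iff_false]
    intro h; exact hy ⟨A ω, h⟩
  simp [prob, this]

lemma prob_comp_inj' {α β : Type*} {A : Ω → α} {f : α → β} (hf : Function.Injective f)
    (x : α) : prob (fun ω => f (A ω)) (f x) = prob A x := by
  have : (fun ω => f (A ω)) ⁻¹' {f x} = A ⁻¹' {x} := by ext ω; simp [hf.eq_iff]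
  simp [prob, this]

lemma entropy_comp_inj {α β : Type*} [Fintype α] [Fintype β]
    {A : Ω → α} {B : Ω → β} (f : α → β) (hf : Function.Injective f)
    (h : ∀ ω, B ω = f (A ω)) : entropy B = entropy A := by
  classical
  rw [entropy_ext' h]
  unfold entropy
  congr 1
  rw [← Finset.sum_subset (Finset.subset_univ (Finset.univ.image f))
    (fun y _ hy => by rw [prob_comp_of_not_mem_range' f (by simpa using hy)]; simp)]
  rw [Finset.sum_image (fun x _ y _ hxy => hf hxy)]
  exact Finset.sum_congr rfl fun x _ => by rw [prob_comp_inj' hf]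


lemma entropy_congr_prob' {α : Type*} [Fintype α] {A B : Ω → α}
    (h : ∀ x, prob A x = prob B x) : entropy A = entropy B := by
  simp only [entropy, h]

lemma sum_rot' {α β γ : Type*} [Fintype α] [Fintype β] [Fintype γ] (f : α → β → γ → ℝ) :
    ∑ a, ∑ b, ∑ z, f a b z = ∑ z, ∑ a, ∑ b, f a b z := by
  trans (∑ a, ∑ z, ∑ b, f a b z)
  · exact Finset.sum_congr rfl fun a _ => Finset.sum_comm
  · exact Finset.sum_comm

section Meas
variable [IsProbabilityMeasure (ℙ : Measure Ω)]

lemma prob_comp_fiber {Γ Δ : Type*} [Fintype Γ] [MeasurableSpace Γ]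
    [MeasurableSingletonClass Γ] [DecidableEq Δ] {G : Ω → Γ} (hG : Measurable G)
    (F : Γ → Δ) (y : Δ) :
    prob (fun ω => F (G ω)) y = ∑ g : Γ, if F g = y then prob G g else 0 := by
  classical
  have hset : (fun ω => F (G ω)) ⁻¹' {y}
      = ⋃ g ∈ Finset.univ.filter (fun g => F g = y), G ⁻¹' {g} := by
    ext ω
    simp only [Set.mem_preimage, Set.mem_singleton_iff, Set.mem_iUnion, Finset.mem_filter,
      Finset.mem_univ, true_and]
    constructor
    · intro h; exact ⟨G ω, h, rfl⟩
    · rintro ⟨g, hg, h⟩; rw [h]; exact hg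
  have hdisj : (↑(Finset.univ.filter (fun g => F g = y)) : Set Γ).PairwiseDisjoint
      (fun g => G ⁻¹' {g}) := by
    intro a _ b _ hab
    exact Set.disjoint_left.2 fun ω ha hb => hab (by
      simp only [Set.mem_preimage, Set.mem_singleton_iff] at ha hb; rw [← ha, ← hb])
  have := measure_biUnion_finset (μ := ℙ) hdisj (fun g _ => hG (measurableSet_singleton g))
  rw [prob, hset, this, ENNReal.toReal_sum (fun a _ => measure_ne_top _ _),
    Finset.sum_filter]
  rfl

lemma sum_prob {Γ : Type*} [Fintype Γ] [MeasurableSpace Γ] [MeasurableSingletonClass Γ]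
    {G : Ω → Γ} (hG : Measurable G) : ∑ g : Γ, prob G g = 1 := by
  classical
  have hset : (Set.univ : Set Ω) = ⋃ g ∈ (Finset.univ : Finset Γ), G ⁻¹' {g} := by
    ext ω; simp
  have hdisj : (↑(Finset.univ : Finset Γ) : Set Γ).PairwiseDisjoint (fun g => G ⁻¹' {g}) := by
    intro a _ b _ hab
    exact Set.disjoint_left.2 fun ω ha hb => hab (by
      simp only [Set.mem_preimage, Set.mem_singleton_iff] at ha hb; rw [← ha, ← hb])
  have h := measure_biUnion_finset (μ := ℙ) hdisj (fun g _ => hG (measurableSet_singleton g))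
  rw [← hset, measure_univ] at h
  have := congrArg ENNReal.toReal h
  rw [ENNReal.toReal_sum (fun a _ => measure_ne_top _ _)] at this
  simpa [prob] using this.symm

variable {α β γ : Type*} [Fintype α] [Fintype β] [Fintype γ]
  [MeasurableSpace α] [MeasurableSingletonClass α]
  [MeasurableSpace β] [MeasurableSingletonClass β]
  [MeasurableSpace γ] [MeasurableSingletonClass γ]
  {A : Ω → α} {B : Ω → β} {Z : Ω → γ}

lemma prob_marg_AZ (hA : Measurable A) (hB : Measurable B) (hZ : Measurable Z) (a : α) (z : γ) :
    prob (fun ω => (A ω, Z ω)) (a, z) = ∑ b, prob (fun ω => (A ω, B ω, Z ω)) (a, b, z) := by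
  classical
  have h := prob_comp_fiber (hA.prodMk (hB.prodMk hZ))
    (fun x : α × β × γ => (x.1, x.2.2)) (a, z)
  rw [h]
  simp [Fintype.sum_prod_type, Prod.ext_iff, ite_and, Finset.sum_ite_eq', Finset.sum_ite_eq]

lemma prob_marg_BZ (hA : Measurable A) (hB : Measurable B) (hZ : Measurable Z) (b : β) (z : γ) :
    prob (fun ω => (B ω, Z ω)) (b, z) = ∑ a, prob (fun ω => (A ω, B ω, Z ω)) (a, b, z) := by
  classical
  have h := prob_comp_fiber (hA.prodMk (hB.prodMk hZ))
    (fun x : α × β × γ => (x.2.1, x.2.2)) (b, z)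
  rw [h]
  simp [Fintype.sum_prod_type, Prod.ext_iff, ite_and, Finset.sum_ite_eq', Finset.sum_ite_eq]

lemma prob_marg_Z (hA : Measurable A) (hB : Measurable B) (hZ : Measurable Z) (z : γ) :
    prob Z z = ∑ a, ∑ b, prob (fun ω => (A ω, B ω, Z ω)) (a, b, z) := by
  classical
  have h := prob_comp_fiber (hA.prodMk (hB.prodMk hZ)) (fun x : α × β × γ => x.2.2) z
  rw [h]
  simp [Fintype.sum_prod_type, Finset.sum_ite_eq', Finset.sum_ite_eq]

lemma cmi_eq_sum (hA : Measurable A) (hB : Measurable B) (hZ : Measurable Z) :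
    condMutualInfo A B Z = ∑ a, ∑ b, ∑ z, prob (fun ω => (A ω, B ω, Z ω)) (a, b, z) *
      (Real.log (prob (fun ω => (A ω, B ω, Z ω)) (a, b, z)) + Real.log (prob Z z)
       - Real.log (prob (fun ω => (A ω, Z ω)) (a, z))
       - Real.log (prob (fun ω => (B ω, Z ω)) (b, z))) := by
  classical
  have E3 : entropy (fun ω => (A ω, B ω, Z ω))
      = -∑ a, ∑ b, ∑ z, prob (fun ω => (A ω, B ω, Z ω)) (a, b, z) *
          Real.log (prob (fun ω => (A ω, B ω, Z ω)) (a, b, z)) := by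
    rw [entropy]; congr 1; simp [Fintype.sum_prod_type]
  have E1 : entropy (fun ω => (A ω, Z ω))
      = -∑ a, ∑ b, ∑ z, prob (fun ω => (A ω, B ω, Z ω)) (a, b, z) *
          Real.log (prob (fun ω => (A ω, Z ω)) (a, z)) := by
    rw [entropy]; congr 1
    rw [Fintype.sum_prod_type]
    refine Finset.sum_congr rfl fun a _ => ?_
    rw [← Finset.sum_comm]
    refine Finset.sum_congr rfl fun z _ => ?_
    rw [prob_marg_AZ hA hB hZ, Finset.sum_mul]
  have E2 : entropy (fun ω => (B ω, Z ω))
      = -∑ a, ∑ b, ∑ z, prob (fun ω => (A ω, B ω, Z ω)) (a, b, z) *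
          Real.log (prob (fun ω => (B ω, Z ω)) (b, z)) := by
    rw [entropy]; congr 1
    rw [Fintype.sum_prod_type]
    symm
    rw [Finset.sum_comm]
    refine Finset.sum_congr rfl fun b _ => ?_
    rw [Finset.sum_comm]
    refine Finset.sum_congr rfl fun z _ => ?_
    rw [prob_marg_BZ hA hB hZ, Finset.sum_mul]
  have E4 : entropy Z
      = -∑ a, ∑ b, ∑ z, prob (fun ω => (A ω, B ω, Z ω)) (a, b, z) * Real.log (prob Z z) := by
    rw [entropy]; congr 1
    symm
    trans (∑ a, ∑ z, ∑ b, prob (fun ω => (A ω, B ω, Z ω)) (a, b, z) * Real.log (prob Z z))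
    · exact Finset.sum_congr rfl fun a _ => Finset.sum_comm
    rw [Finset.sum_comm]
    refine Finset.sum_congr rfl fun z _ => ?_
    trans (∑ a, (∑ b, prob (fun ω => (A ω, B ω, Z ω)) (a, b, z)) * Real.log (prob Z z))
    · exact Finset.sum_congr rfl fun a _ => (Finset.sum_mul _ _ _).symm
    rw [← Finset.sum_mul, ← prob_marg_Z hA hB hZ]
  rw [condMutualInfo, E1, E2, E3, E4]
  have key : ∀ s1 s2 s3 s4 : ℝ, -s1 + -s2 - -s3 - -s4 = (s3 + s4) - s1 - s2 := by
    intros; ring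
  rw [key, ← Finset.sum_add_distrib, ← Finset.sum_sub_distrib, ← Finset.sum_sub_distrib]
  refine Finset.sum_congr rfl fun a _ => ?_
  rw [← Finset.sum_add_distrib, ← Finset.sum_sub_distrib, ← Finset.sum_sub_distrib]
  refine Finset.sum_congr rfl fun b _ => ?_
  rw [← Finset.sum_add_distrib, ← Finset.sum_sub_distrib, ← Finset.sum_sub_distrib]
  refine Finset.sum_congr rfl fun z _ => ?_
  ring

lemma condMutualInfo_nonneg (hA : Measurable A) (hB : Measurable B) (hZ : Measurable Z) :
    0 ≤ condMutualInfo A B Z := by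
  classical
  set p := fun a b z => prob (fun ω => (A ω, B ω, Z ω)) (a, b, z) with hp
  set u := fun a z => prob (fun ω => (A ω, Z ω)) (a, z) with hu
  set v := fun b z => prob (fun ω => (B ω, Z ω)) (b, z) with hv
  set w := fun z => prob Z z with hw
  have hu_eq : ∀ a z, u a z = ∑ b, p a b z := fun a z => prob_marg_AZ hA hB hZ a z
  have hv_eq : ∀ b z, v b z = ∑ a, p a b z := fun b z => prob_marg_BZ hA hB hZ b z
  have hw_eq : ∀ z, w z = ∑ a, ∑ b, p a b z := fun z => prob_marg_Z hA hB hZ z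
  have hp0 : ∀ a b z, 0 ≤ p a b z := fun a b z => prob_nonneg' _ _
  have hu0 : ∀ a z, 0 ≤ u a z := fun a z => prob_nonneg' _ _
  have hv0 : ∀ b z, 0 ≤ v b z := fun b z => prob_nonneg' _ _
  have hw0 : ∀ z, 0 ≤ w z := fun z => prob_nonneg' _ _
  have hpu : ∀ a b z, p a b z ≤ u a z := fun a b z => by
    rw [hu_eq]; exact Finset.single_le_sum (fun i _ => hp0 a i z) (Finset.mem_univ b)
  have hpv : ∀ a b z, p a b z ≤ v b z := fun a b z => by
    rw [hv_eq]; exact Finset.single_le_sum (fun i _ => hp0 i b z) (Finset.mem_univ a)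
  have hu_sum : ∀ z, ∑ a, u a z = w z := fun z => by
    rw [hw_eq]; exact Finset.sum_congr rfl fun a _ => hu_eq a z
  have hv_sum : ∀ z, ∑ b, v b z = w z := fun z => by
    rw [hw_eq, Finset.sum_comm]; exact Finset.sum_congr rfl fun b _ => hv_eq b z
  have huw : ∀ a z, u a z ≤ w z := fun a z => by
    rw [← hu_sum z]; exact Finset.single_le_sum (fun i _ => hu0 i z) (Finset.mem_univ a)
  have key : ∀ a b z, p a b z - u a z * v b z / w z
      ≤ p a b z * (Real.log (p a b z) + Real.log (w z)
        - Real.log (u a z) - Real.log (v b z)) := by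
    intro a b z
    by_cases hpz : p a b z = 0
    · rw [hpz]
      simp only [zero_mul, zero_sub, neg_nonpos]
      exact div_nonneg (mul_nonneg (hu0 a z) (hv0 b z)) (hw0 z)
    · have hppos : 0 < p a b z := lt_of_le_of_ne (hp0 a b z) (Ne.symm hpz)
      have hupos : 0 < u a z := lt_of_lt_of_le hppos (hpu a b z)
      have hvpos : 0 < v b z := lt_of_lt_of_le hppos (hpv a b z)
      have hwpos : 0 < w z := lt_of_lt_of_le hupos (huw a z)
      have hlog : Real.log (p a b z) + Real.log (w z) - Real.log (u a z) - Real.log (v b z)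
          = -(Real.log ((u a z * v b z) / (p a b z * w z))) := by
        rw [Real.log_div (by positivity) (by positivity), Real.log_mul (ne_of_gt hupos)
          (ne_of_gt hvpos), Real.log_mul (ne_of_gt hppos) (ne_of_gt hwpos)]
        ring
      rw [hlog]
      have hx : 0 < (u a z * v b z) / (p a b z * w z) := by positivity
      have hlb := Real.log_le_sub_one_of_pos hx
      have hfield : p a b z * ((u a z * v b z) / (p a b z * w z)) = u a z * v b z / w z := by
        field_simp
      nlinarith [mul_le_mul_of_nonneg_left hlb (le_of_lt hppos)]
  rw [cmi_eq_sum hA hB hZ, sum_rot']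
  have hsum_p : ∑ z, ∑ a, ∑ b, p a b z = 1 := by
    rw [← sum_rot']
    have := sum_prob (hA.prodMk (hB.prodMk hZ))
    rw [Fintype.sum_prod_type] at this
    simpa [Fintype.sum_prod_type] using this
  have per_z : ∀ z, ∑ a, ∑ b, u a z * v b z / w z = w z := by
    intro z
    by_cases hwz : w z = 0
    · have hu_all : ∀ a, u a z = 0 := fun a => le_antisymm (hwz ▸ huw a z) (hu0 a z)
      simp [hu_all, hwz]
    · trans (∑ a, u a z)
      · refine Finset.sum_congr rfl fun a _ => ?_
        calc ∑ b, u a z * v b z / w z = (u a z / w z) * ∑ b, v b z := by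
              rw [Finset.mul_sum]; exact Finset.sum_congr rfl fun b _ => by ring
          _ = u a z := by rw [hv_sum]; field_simp
      · exact hu_sum z
  have hbound : ∑ z, ∑ a, ∑ b, (p a b z - u a z * v b z / w z)
      ≤ ∑ z, ∑ a, ∑ b, p a b z * (Real.log (p a b z) + Real.log (w z)
        - Real.log (u a z) - Real.log (v b z)) := by
    refine Finset.sum_le_sum fun z _ => Finset.sum_le_sum fun a _ =>
      Finset.sum_le_sum fun b _ => key a b z
  have hLHS : ∑ z, ∑ a, ∑ b, (p a b z - u a z * v b z / w z) = 0 := by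
    have hz : ∀ z, ∑ a, ∑ b, (p a b z - u a z * v b z / w z)
        = (∑ a, ∑ b, p a b z) - w z := by
      intro z
      calc ∑ a, ∑ b, (p a b z - u a z * v b z / w z)
          = ∑ a, ((∑ b, p a b z) - ∑ b, u a z * v b z / w z) :=
            Finset.sum_congr rfl fun a _ => Finset.sum_sub_distrib _ _
        _ = (∑ a, ∑ b, p a b z) - ∑ a, ∑ b, u a z * v b z / w z := Finset.sum_sub_distrib _ _
        _ = (∑ a, ∑ b, p a b z) - w z := by rw [per_z z]
    rw [Finset.sum_congr rfl fun z _ => hz z, Finset.sum_sub_distrib, hsum_p, sum_prob hZ]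
    ring
  linarith [hbound, hLHS.symm.le]

lemma condMutualInfo_eq_zero_of_factor (hA : Measurable A) (hB : Measurable B)
    (hZ : Measurable Z)
    (hfac : ∀ a b z, prob (fun ω => (A ω, B ω, Z ω)) (a, b, z) * prob Z z
      = prob (fun ω => (A ω, Z ω)) (a, z) * prob (fun ω => (B ω, Z ω)) (b, z)) :
    condMutualInfo A B Z = 0 := by
  classical
  rw [cmi_eq_sum hA hB hZ]
  refine Finset.sum_eq_zero fun a _ => Finset.sum_eq_zero fun b _ =>
    Finset.sum_eq_zero fun z _ => ?_
  by_cases hpz : prob (fun ω => (A ω, B ω, Z ω)) (a, b, z) = 0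
  · rw [hpz]; ring
  · have hppos : 0 < prob (fun ω => (A ω, B ω, Z ω)) (a, b, z) :=
      lt_of_le_of_ne (prob_nonneg' _ _) (Ne.symm hpz)
    have hpu : prob (fun ω => (A ω, B ω, Z ω)) (a, b, z)
        ≤ prob (fun ω => (A ω, Z ω)) (a, z) := by
      rw [prob_marg_AZ hA hB hZ]
      exact Finset.single_le_sum
        (f := fun b' => prob (fun ω => (A ω, B ω, Z ω)) (a, b', z))
        (fun i _ => prob_nonneg' _ _) (Finset.mem_univ b)
    have hpv : prob (fun ω => (A ω, B ω, Z ω)) (a, b, z)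
        ≤ prob (fun ω => (B ω, Z ω)) (b, z) := by
      rw [prob_marg_BZ hA hB hZ]
      exact Finset.single_le_sum
        (f := fun a' => prob (fun ω => (A ω, B ω, Z ω)) (a', b, z))
        (fun i _ => prob_nonneg' _ _) (Finset.mem_univ a)
    have hpw : prob (fun ω => (A ω, B ω, Z ω)) (a, b, z) ≤ prob Z z := by
      rw [prob_marg_Z hA hB hZ (z := z)]
      calc prob (fun ω => (A ω, B ω, Z ω)) (a, b, z)
          ≤ ∑ b', prob (fun ω => (A ω, B ω, Z ω)) (a, b', z) :=
            Finset.single_le_sum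
              (f := fun b' => prob (fun ω => (A ω, B ω, Z ω)) (a, b', z))
              (fun i _ => prob_nonneg' _ _) (Finset.mem_univ b)
        _ ≤ _ := Finset.single_le_sum
              (f := fun a' => ∑ b', prob (fun ω => (A ω, B ω, Z ω)) (a', b', z))
              (fun i _ => Finset.sum_nonneg fun j _ => prob_nonneg' _ _)
              (Finset.mem_univ a)
    have hupos : 0 < prob (fun ω => (A ω, Z ω)) (a, z) := lt_of_lt_of_le hppos hpu
    have hvpos : 0 < prob (fun ω => (B ω, Z ω)) (b, z) := lt_of_lt_of_le hppos hpv
    have hwpos : 0 < prob Z z := lt_of_lt_of_le hppos hpw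
    have hlogz : Real.log (prob (fun ω => (A ω, B ω, Z ω)) (a, b, z)) + Real.log (prob Z z)
        - Real.log (prob (fun ω => (A ω, Z ω)) (a, z))
        - Real.log (prob (fun ω => (B ω, Z ω)) (b, z)) = 0 := by
      have h1 : Real.log (prob (fun ω => (A ω, B ω, Z ω)) (a, b, z) * prob Z z)
          = Real.log (prob (fun ω => (A ω, Z ω)) (a, z)
              * prob (fun ω => (B ω, Z ω)) (b, z)) := by
        rw [hfac a b z]
      rw [Real.log_mul (ne_of_gt hppos) (ne_of_gt hwpos),
        Real.log_mul (ne_of_gt hupos) (ne_of_gt hvpos)] at h1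
      linarith
    rw [hlogz]
    ring

end Meas

section Relabel
variable {α β γ δ α' : Type*} [Fintype α] [Fintype β] [Fintype γ] [Fintype δ] [Fintype α']

lemma entropy_pair_comm (A : Ω → α) (B : Ω → β) :
    entropy (fun ω => (A ω, B ω)) = entropy (fun ω => (B ω, A ω)) :=
  entropy_comp_inj (f := Prod.swap) Prod.swap_injective (fun _ => rfl)

lemma cmi_chain (A : Ω → α) (B : Ω → β) (Y : Ω → γ) (Z : Ω → δ) :
    condMutualInfo (fun ω => (A ω, B ω)) Y Z
      = condMutualInfo B Y Z + condMutualInfo A Y (fun ω => (B ω, Z ω)) := by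
  have R1 : entropy (fun ω => ((A ω, B ω), Z ω)) = entropy (fun ω => (A ω, (B ω, Z ω))) :=
    entropy_comp_inj (f := fun x : α × β × δ => ((x.1, x.2.1), x.2.2))
      (fun x y h => by simp_all [Prod.ext_iff]) (fun _ => rfl)
  have R2 : entropy (fun ω => (Y ω, (B ω, Z ω))) = entropy (fun ω => (B ω, (Y ω, Z ω))) :=
    entropy_comp_inj (f := fun x : β × γ × δ => (x.2.1, (x.1, x.2.2)))
      (fun x y h => by simp_all [Prod.ext_iff]) (fun _ => rfl)
  have R3 : entropy (fun ω => ((A ω, B ω), (Y ω, Z ω)))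
      = entropy (fun ω => (A ω, (Y ω, (B ω, Z ω)))) :=
    entropy_comp_inj (f := fun x : α × γ × β × δ => ((x.1, x.2.2.1), (x.2.1, x.2.2.2)))
      (fun x y h => by simp_all [Prod.ext_iff]) (fun _ => rfl)
  simp only [condMutualInfo]
  rw [R1, R2, R3]
  ring

lemma mi_chain (A : Ω → α) (B : Ω → β) (Y : Ω → γ) :
    mutualInfo (fun ω => (A ω, B ω)) Y = mutualInfo B Y + condMutualInfo A Y B := by
  have R1 : entropy (fun ω => (Y ω, B ω)) = entropy (fun ω => (B ω, Y ω)) :=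
    entropy_pair_comm Y B
  have R2 : entropy (fun ω => ((A ω, B ω), Y ω)) = entropy (fun ω => (A ω, (Y ω, B ω))) :=
    entropy_comp_inj (f := fun x : α × γ × β => ((x.1, x.2.2), x.2.1))
      (fun x y h => by simp_all [Prod.ext_iff]) (fun _ => rfl)
  simp only [mutualInfo, condMutualInfo]
  rw [R1, R2]
  ring

lemma mi_cmi_identity (A : Ω → α) (B : Ω → β) (C : Ω → γ) :
    mutualInfo A B + condMutualInfo A C B = mutualInfo A C + condMutualInfo A B C := by
  have R1 : entropy (fun ω => (C ω, B ω)) = entropy (fun ω => (B ω, C ω)) :=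
    entropy_pair_comm C B
  have R2 : entropy (fun ω => (A ω, (C ω, B ω))) = entropy (fun ω => (A ω, (B ω, C ω))) :=
    entropy_comp_inj (f := fun x : α × β × γ => (x.1, (x.2.2, x.2.1)))
      (fun x y h => by simp_all [Prod.ext_iff]) (fun _ => rfl)
  simp only [mutualInfo, condMutualInfo]
  rw [R1, R2]
  ring

lemma cmi_comm (A : Ω → α) (B : Ω → β) (Z : Ω → γ) :
    condMutualInfo A B Z = condMutualInfo B A Z := by
  have R : entropy (fun ω => (A ω, (B ω, Z ω))) = entropy (fun ω => (B ω, (A ω, Z ω))) :=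
    entropy_comp_inj (f := fun x : β × α × γ => (x.2.1, (x.1, x.2.2)))
      (fun x y h => by simp_all [Prod.ext_iff]) (fun _ => rfl)
  simp only [condMutualInfo]
  rw [R]
  ring

lemma cmi_congr_left {A : Ω → α} {A' : Ω → α'} {B : Ω → β} {Z : Ω → γ}
    (f : α → α') (hf : Function.Injective f) (h : ∀ ω, A' ω = f (A ω)) :
    condMutualInfo A' B Z = condMutualInfo A B Z := by
  have R1 : entropy (fun ω => (A' ω, Z ω)) = entropy (fun ω => (A ω, Z ω)) :=
    entropy_comp_inj (f := fun x : α × γ => (f x.1, x.2))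
      (fun x y hxy => by
        simp only [Prod.ext_iff] at hxy ⊢; exact ⟨hf hxy.1, hxy.2⟩)
      (fun ω => by rw [h ω])
  have R2 : entropy (fun ω => (A' ω, B ω, Z ω)) = entropy (fun ω => (A ω, B ω, Z ω)) :=
    entropy_comp_inj (f := fun x : α × β × γ => (f x.1, x.2))
      (fun x y hxy => by
        simp only [Prod.ext_iff] at hxy ⊢; exact ⟨hf hxy.1, hxy.2⟩)
      (fun ω => by rw [h ω])
  simp only [condMutualInfo]
  rw [R1, R2]

lemma mi_congr_left {A : Ω → α} {A' : Ω → α'} {B : Ω → β}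
    (f : α → α') (hf : Function.Injective f) (h : ∀ ω, A' ω = f (A ω)) :
    mutualInfo A' B = mutualInfo A B := by
  have R1 : entropy A' = entropy A := entropy_comp_inj f hf h
  have R2 : entropy (fun ω => (A' ω, B ω)) = entropy (fun ω => (A ω, B ω)) :=
    entropy_comp_inj (f := fun x : α × β => (f x.1, x.2))
      (fun x y hxy => by
        simp only [Prod.ext_iff] at hxy ⊢; exact ⟨hf hxy.1, hxy.2⟩)
      (fun ω => by rw [h ω])
  simp only [mutualInfo]
  rw [R1, R2]

lemma entropy_const [IsProbabilityMeasure (ℙ : Measure Ω)] (c : α) :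
    entropy (fun _ : Ω => c) = 0 := by
  classical
  have h1 : prob (fun _ : Ω => c) c = 1 := by
    have h : (fun _ : Ω => c) ⁻¹' {c} = Set.univ := by ext; simp
    simp [prob, h]
  have h2 : ∀ y, y ≠ c → prob (fun _ : Ω => c) y = 0 := by
    intro y hy
    have h : (fun _ : Ω => c) ⁻¹' {y} = ∅ := by ext; simp [Ne.symm hy]
    simp [prob, h]
  rw [entropy, Finset.sum_eq_single c]
  · rw [h1]; simp
  · intro y _ hy; rw [h2 y hy]; simp
  · intro hc; exact absurd (Finset.mem_univ c) hc

lemma mi_eq_cmi_const [IsProbabilityMeasure (ℙ : Measure Ω)] (A : Ω → α) (B : Ω → β) :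
    mutualInfo A B = condMutualInfo A B (fun _ => false) := by
  have R1 : entropy (fun ω : Ω => (A ω, false)) = entropy A :=
    entropy_comp_inj (f := fun a : α => (a, false))
      (fun x y h => by simpa using congrArg Prod.fst h) (fun _ => rfl)
  have R2 : entropy (fun ω : Ω => (B ω, false)) = entropy B :=
    entropy_comp_inj (f := fun b : β => (b, false))
      (fun x y h => by simpa using congrArg Prod.fst h) (fun _ => rfl)
  have R3 : entropy (fun ω : Ω => (A ω, B ω, false)) = entropy (fun ω => (A ω, B ω)) :=
    entropy_comp_inj (f := fun x : α × β => (x.1, x.2, false))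
      (fun x y h => by simp_all [Prod.ext_iff]) (fun _ => rfl)
  simp only [mutualInfo, condMutualInfo]
  rw [R1, R2, R3, entropy_const]
  ring

end Relabel

section DPI
variable [IsProbabilityMeasure (ℙ : Measure Ω)]
variable {α α' β γ : Type*} [Fintype α] [Fintype β] [Fintype γ] [Fintype α']
  [MeasurableSpace α] [MeasurableSingletonClass α]
  [MeasurableSpace α'] [MeasurableSingletonClass α']
  [MeasurableSpace β] [MeasurableSingletonClass β]
  [MeasurableSpace γ] [MeasurableSingletonClass γ]

lemma cmi_dpi_left {A : Ω → α} {A' : Ω → α'} {Y : Ω → β} {Z : Ω → γ}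
    (g : α → α') (h : ∀ ω, A' ω = g (A ω))
    (hA : Measurable A) (hY : Measurable Y) (hZ : Measurable Z) :
    condMutualInfo A' Y Z ≤ condMutualInfo A Y Z := by
  have hA' : Measurable A' := by
    rw [show A' = (fun ω => g (A ω)) from funext h]
    exact (Measurable.of_discrete (f := g)).comp hA
  have e1 : condMutualInfo (fun ω => (A ω, A' ω)) Y Z = condMutualInfo A Y Z :=
    cmi_congr_left (f := fun a => (a, g a))
      (fun x y hxy => congrArg Prod.fst hxy) (fun ω => by rw [h ω])
  have e2 := cmi_chain A A' Y Z
  have e3 : 0 ≤ condMutualInfo A Y (fun ω => (A' ω, Z ω)) :=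
    condMutualInfo_nonneg hA hY (hA'.prodMk hZ)
  have e2' : condMutualInfo (fun ω => (A ω, A' ω)) Y Z
      = condMutualInfo A' Y Z + condMutualInfo A Y (fun ω => (A' ω, Z ω)) := e2
  linarith [e1, e2', e3]

lemma cmi_dpi_right {A : Ω → α} {B : Ω → β} {B' : Ω → α'} {Z : Ω → γ}
    (g : β → α') (h : ∀ ω, B' ω = g (B ω))
    (hA : Measurable A) (hB : Measurable B) (hZ : Measurable Z) :
    condMutualInfo A B' Z ≤ condMutualInfo A B Z := by
  rw [cmi_comm A B' Z, cmi_comm A B Z]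
  exact cmi_dpi_left g h hB hA hZ

lemma mi_dpi_right {A : Ω → α} {B : Ω → β} {B' : Ω → α'}
    (g : β → α') (h : ∀ ω, B' ω = g (B ω))
    (hA : Measurable A) (hB : Measurable B) :
    mutualInfo A B' ≤ mutualInfo A B := by
  rw [mi_eq_cmi_const A B', mi_eq_cmi_const A B]
  exact cmi_dpi_right g h hA hB measurable_const

lemma mutualInfo_nonneg {A : Ω → α} {B : Ω → β} (hA : Measurable A) (hB : Measurable B) :
    0 ≤ mutualInfo A B := by
  rw [mi_eq_cmi_const A B]
  exact condMutualInfo_nonneg hA hB measurable_const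

lemma entropy_comp_invariant {Γ Δ : Type*} [Fintype Γ] [Fintype Δ]
    [MeasurableSpace Γ] [MeasurableSingletonClass Γ]
    {G : Ω → Γ} (hG : Measurable G) (e : Γ ≃ Γ)
    (hinv : ∀ g, prob G (e g) = prob G g) (F : Γ → Δ) :
    entropy (fun ω => F (e (G ω))) = entropy (fun ω => F (G ω)) := by
  classical
  apply entropy_congr_prob'
  intro y
  rw [prob_comp_fiber hG (fun g => F (e g)) y, prob_comp_fiber hG F y]
  rw [← Equiv.sum_comp e (fun g => if F g = y then prob G g else 0)]
  exact Finset.sum_congr rfl fun g _ => by rw [hinv g]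

lemma entropy_comp_perm {Ψ' E Δ' : Type*} {n : ℕ} [Fintype Ψ'] [Fintype E] [Fintype Δ']
    [MeasurableSpace Ψ'] [MeasurableSingletonClass Ψ']
    [MeasurableSpace E] [MeasurableSingletonClass E]
    {G : Ω → Ψ' × (Fin n → E)} (hG : Measurable G) (σ : Equiv.Perm (Fin n))
    (hinv : ∀ s v, prob G (s, v ∘ σ) = prob G (s, v))
    (F : Ψ' × (Fin n → E) → Δ') :
    entropy (fun ω => F ((G ω).1, (G ω).2 ∘ σ)) = entropy (fun ω => F (G ω)) := by
  classical
  let e : (Ψ' × (Fin n → E)) ≃ (Ψ' × (Fin n → E)) :=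
    { toFun := fun g => (g.1, g.2 ∘ σ)
      invFun := fun g => (g.1, g.2 ∘ σ.symm)
      left_inv := fun g => Prod.ext_iff.mpr ⟨rfl, funext fun x => by simp⟩
      right_inv := fun g => Prod.ext_iff.mpr ⟨rfl, funext fun x => by simp⟩ }
  exact entropy_comp_invariant hG e (fun g => hinv g.1 g.2) F

end DPI
end Toolkit

/-- **In-context learning error bound** (paper, Theorem 7).
Extend the meta-learning setup to `M+1` documents: conditioned on `ψ`, the pairs
`(θ_m, D_m)` for `m = 1, …, M+1` are i.i.d., and `I[D_m ; ψ | θ_m] = 0` for every `m`.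
For `1 ≤ τ ≤ T`, letting `W = (X^{(M+1)}_1, …, X^{(M+1)}_τ)` be the in-context sequence
and `H_{M+1,t} = (D_1, …, D_M, X^{(M+1)}_1, …, X^{(M+1)}_t)`, the optimal in-context
average log-loss is bounded by irreducible error, meta-estimation error, and in-context
estimation error:
`(1/τ) ∑_{t=0}^{τ-1} H[X^{(M+1)}_{t+1} | H_{M+1,t}]
   ≤ H[W | θ_{M+1}]/τ + I[(D_1,…,D_M) ; ψ]/(Mτ) + I[W ; θ_{M+1} | ψ]/τ`. -/
theorem in_context_learning_error_bound
    {Ω : Type*} [MeasureSpace Ω] [IsProbabilityMeasure (ℙ : Measure Ω)]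
    {𝒳 Θ Ψ : Type*} [Fintype 𝒳] [Nonempty 𝒳] [Fintype Θ] [Nonempty Θ]
    [Fintype Ψ] [Nonempty Ψ]
    [MeasurableSpace 𝒳] [MeasurableSingletonClass 𝒳]
    [MeasurableSpace Θ] [MeasurableSingletonClass Θ]
    [MeasurableSpace Ψ] [MeasurableSingletonClass Ψ]
    (M T : ℕ) (hM : 1 ≤ M) (hT : 1 ≤ T)
    (ψ : Ω → Ψ) (θ : Fin (M + 1) → Ω → Θ) (X : Fin (M + 1) → Fin T → Ω → 𝒳)
    (hψ : Measurable ψ) (hθ : ∀ m, Measurable (θ m)) (hX : ∀ m t, Measurable (X m t))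
    -- (i) conditioned on ψ, the pairs (θ_m, D_m), m = 1, …, M+1, are i.i.d.
    (hiid : ∃ κ : Ψ → Θ × (Fin T → 𝒳) → ℝ,
      (∀ s u, 0 ≤ κ s u) ∧ (∀ s, ∑ u, κ s u = 1) ∧
      ∀ (s : Ψ) (v : Fin (M + 1) → Θ × (Fin T → 𝒳)),
        prob (fun ω => (ψ ω, fun m => (θ m ω, fun t => X m t ω))) (s, v)
          = prob ψ s * ∏ m, κ s (v m))
    -- (ii) the meta-parameter carries no extra information about D_m beyond θ_m
    (hCI : ∀ m : Fin (M + 1), condMutualInfo (fun ω (t : Fin T) => X m t ω) ψ (θ m) = 0)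
    (τ : ℕ) (hτ1 : 1 ≤ τ) (hτ : τ ≤ T) :
    (1 / (τ : ℝ)) * ∑ t : Fin τ,
        condEntropy (X (Fin.last M) (Fin.castLE hτ t))
          (fun ω => ((fun (j : Fin M) (s : Fin T) => X j.castSucc s ω),
                     (fun (i : Fin t.val) => X (Fin.last M)
                        (Fin.castLE (t.isLt.le.trans hτ) i) ω)))
      ≤ condEntropy (fun ω (i : Fin τ) => X (Fin.last M) (Fin.castLE hτ i) ω)
          (θ (Fin.last M)) / τ
        + mutualInfo (fun ω (j : Fin M) (s : Fin T) => X j.castSucc s ω) ψ / ((M : ℝ) * τ)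
        + condMutualInfo (fun ω (i : Fin τ) => X (Fin.last M) (Fin.castLE hτ i) ω)
            (θ (Fin.last M)) ψ / τ := by
  classical
  obtain ⟨κ, hκ0, hκ1, hκ⟩ := hiid
  -- W : in-context sequence, D : first M documents, θ' : last task parameter
  set W : Ω → (Fin τ → 𝒳) := fun ω (i : Fin τ) => X (Fin.last M) (Fin.castLE hτ i) ω with hWdef
  set D : Ω → (Fin M → Fin T → 𝒳) := fun ω (j : Fin M) (s : Fin T) => X j.castSucc s ω
    with hDdef
  have hMW : Measurable W := measurable_pi_lambda _ fun i => hX _ _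
  have hMD : Measurable D :=
    measurable_pi_lambda _ fun j => measurable_pi_lambda _ fun s => hX _ _
  have hMθ : Measurable (θ (Fin.last M)) := hθ _
  have hMDlast : Measurable (fun ω (t : Fin T) => X (Fin.last M) t ω) :=
    measurable_pi_lambda _ fun t => hX _ _
  -- ℕ-indexed entropy of (D, history of length n)
  set Sf : ℕ → ℝ := fun n =>
    if hn : n ≤ T then
      entropy (fun ω => (D ω, fun i : Fin n => X (Fin.last M) (Fin.castLE hn i) ω))
    else 0 with hSfdef
  -- each summand telescopes
  have hsummand : ∀ t : Fin τ,
      condEntropy (X (Fin.last M) (Fin.castLE hτ t))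
        (fun ω => ((fun (j : Fin M) (s : Fin T) => X j.castSucc s ω),
                   (fun (i : Fin t.val) => X (Fin.last M)
                      (Fin.castLE (t.isLt.le.trans hτ) i) ω)))
      = Sf (t.val + 1) - Sf t.val := by
    intro t
    have h1 : t.val + 1 ≤ T := le_trans t.isLt hτ
    have h0 : t.val ≤ T := le_trans (le_of_lt t.isLt) hτ
    have e1 : Sf (t.val + 1)
        = entropy (fun ω => (D ω, fun i : Fin (t.val + 1) =>
            X (Fin.last M) (Fin.castLE h1 i) ω)) := by
      rw [hSfdef]; exact dif_pos h1
    have e0 : Sf t.val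
        = entropy (fun ω => (D ω, fun i : Fin t.val =>
            X (Fin.last M) (Fin.castLE h0 i) ω)) := by
      rw [hSfdef]; exact dif_pos h0
    rw [condEntropy, e1, e0]
    congr 1
    · refine entropy_comp_inj
        (f := fun x : (Fin M → Fin T → 𝒳) × (Fin (t.val + 1) → 𝒳) =>
          (x.2 (Fin.last t.val), (x.1, fun i : Fin t.val => x.2 i.castSucc)))
        ?_ ?_
      · intro x y hxy
        simp only [Prod.ext_iff] at hxy
        obtain ⟨hl, hfst, hcs⟩ := hxy
        refine Prod.ext_iff.mpr ⟨hfst, funext fun i => ?_⟩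
        refine Fin.lastCases ?_ ?_ i
        · exact hl
        · exact fun j => congrFun hcs j
      · intro ω
        rfl
  -- telescoping sum
  have hsum1 : (∑ t : Fin τ,
      condEntropy (X (Fin.last M) (Fin.castLE hτ t))
        (fun ω => ((fun (j : Fin M) (s : Fin T) => X j.castSucc s ω),
                   (fun (i : Fin t.val) => X (Fin.last M)
                      (Fin.castLE (t.isLt.le.trans hτ) i) ω))))
      = condEntropy W D := by
    rw [Finset.sum_congr rfl (fun t _ => hsummand t)]
    have htel : ∑ t : Fin τ, (Sf (t.val + 1) - Sf t.val) = Sf τ - Sf 0 :=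
      (Fin.sum_univ_eq_sum_range (fun n => Sf (n + 1) - Sf n) τ).trans
        (Finset.sum_range_sub Sf τ)
    rw [htel]
    have hS0 : Sf 0 = entropy D := by
      have e : Sf 0 = entropy (fun ω => (D ω, fun i : Fin 0 =>
          X (Fin.last M) (Fin.castLE (Nat.zero_le T) i) ω)) := by
        rw [hSfdef]; exact dif_pos (Nat.zero_le T)
      rw [e]
      refine entropy_comp_inj
        (f := fun d : Fin M → Fin T → 𝒳 => (d, fun i : Fin 0 => i.elim0)) ?_ ?_
      · exact fun x y hxy => congrArg Prod.fst hxy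
      · intro ω
        have h0 : (fun i : Fin 0 => X (Fin.last M) (Fin.castLE (Nat.zero_le T) i) ω)
            = (fun i : Fin 0 => i.elim0) := funext fun i => i.elim0
        rw [h0]
    have hSτ : Sf τ = entropy (fun ω => (D ω, W ω)) := by
      have e : Sf τ = entropy (fun ω => (D ω, fun i : Fin τ =>
          X (Fin.last M) (Fin.castLE hτ i) ω)) := by
        rw [hSfdef]; exact dif_pos hτ
      rw [e]
    rw [hS0, hSτ, condEntropy, entropy_pair_comm W D]
  -- Step 2: information algebra
  have halg1 : condEntropy W D = condEntropy W (θ (Fin.last M))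
      + mutualInfo W (θ (Fin.last M)) - mutualInfo W D := by
    simp only [condEntropy, mutualInfo]; ring
  have hWtheta : mutualInfo W (θ (Fin.last M))
      = mutualInfo W ψ + condMutualInfo W (θ (Fin.last M)) ψ
        - condMutualInfo W ψ (θ (Fin.last M)) := by
    have hid := mi_cmi_identity W (θ (Fin.last M)) ψ
    linarith
  have hCIW : condMutualInfo W ψ (θ (Fin.last M)) = 0 := by
    have hle : condMutualInfo W ψ (θ (Fin.last M))
        ≤ condMutualInfo (fun ω (t : Fin T) => X (Fin.last M) t ω) ψ (θ (Fin.last M)) :=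
      cmi_dpi_left (g := fun v : Fin T → 𝒳 => fun i : Fin τ => v (Fin.castLE hτ i))
        (fun ω => rfl) hMDlast hψ hMθ
    rw [hCI (Fin.last M)] at hle
    exact le_antisymm hle (condMutualInfo_nonneg hMW hψ hMθ)
  have hWpsi : mutualInfo W ψ ≤ mutualInfo W D + condMutualInfo W ψ D := by
    have hid := mi_cmi_identity W ψ D
    have hnn : 0 ≤ condMutualInfo W D ψ := condMutualInfo_nonneg hMW hMD hψ
    linarith
  have hdpiW : condMutualInfo W ψ D
      ≤ condMutualInfo (fun ω (t : Fin T) => X (Fin.last M) t ω) ψ D :=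
    cmi_dpi_left (g := fun v : Fin T → 𝒳 => fun i : Fin τ => v (Fin.castLE hτ i))
      (fun ω => rfl) hMDlast hψ hMD
  -- Step 5: meta estimation error bound
  have hstep5 : (M : ℝ) * condMutualInfo (fun ω (t : Fin T) => X (Fin.last M) t ω) ψ D
      ≤ mutualInfo D ψ := by
    -- grand variable
    set G : Ω → Ψ × (Fin (M + 1) → Θ × (Fin T → 𝒳)) :=
      fun ω => (ψ ω, fun m => (θ m ω, fun t => X m t ω)) with hGdef
    have hMG : Measurable G := hψ.prodMk (measurable_pi_lambda _ fun m =>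
      (hθ m).prodMk (measurable_pi_lambda _ fun t => hX m t))
    have hswap_inv : ∀ (σ : Equiv.Perm (Fin (M + 1))) (s : Ψ)
        (v : Fin (M + 1) → Θ × (Fin T → 𝒳)), prob G (s, v ∘ σ) = prob G (s, v) := by
      intro σ s v
      rw [hκ, hκ]
      congr 1
      exact Equiv.prod_comp σ (fun u => κ s (v u))
    -- conditional independence of the last document from the first M given ψ
    set κ2 : Ψ → (Fin T → 𝒳) → ℝ := fun s x => ∑ u : Θ, κ s (u, x) with hκ2def
    have hκ2sum : ∀ s, ∑ x : Fin T → 𝒳, κ2 s x = 1 := by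
      intro s
      have h := hκ1 s
      rw [Fintype.sum_prod_type] at h
      rw [hκ2def]
      rw [Finset.sum_comm]
      exact h
    have hprodsum : ∀ (s' : Ψ) (x : Fin (M + 1) → Fin T → 𝒳),
        ∑ w : Fin (M + 1) → Θ, ∏ m_1, κ s' (w m_1, x m_1) = ∏ m_1, κ2 s' (x m_1) := by
      intro s' x
      symm
      calc ∏ m_1, κ2 s' (x m_1) = ∏ m_1 : Fin (M + 1), ∑ u : Θ, κ s' (u, x m_1) := rfl
        _ = ∑ w ∈ Fintype.piFinset (fun _ : Fin (M + 1) => (Finset.univ : Finset Θ)),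
              ∏ m_1, κ s' (w m_1, x m_1) :=
            Finset.prod_univ_sum _ _
        _ = ∑ w : Fin (M + 1) → Θ, ∏ m_1, κ s' (w m_1, x m_1) := by
            rw [Fintype.piFinset_univ]
    have hrestsum : ∀ s : Ψ, ∑ b : Fin M → Fin T → 𝒳, ∏ j, κ2 s (b j) = 1 := by
      intro s
      calc ∑ b : Fin M → Fin T → 𝒳, ∏ j, κ2 s (b j)
          = ∑ b ∈ Fintype.piFinset (fun _ : Fin M => (Finset.univ : Finset (Fin T → 𝒳))),
              ∏ j, κ2 s (b j) := by rw [Fintype.piFinset_univ]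
        _ = ∏ _j : Fin M, ∑ x : Fin T → 𝒳, κ2 s x := (Finset.prod_univ_sum _ _).symm
        _ = 1 := by
            rw [Finset.prod_congr rfl (fun j _ => hκ2sum s)]
            simp
    -- the joint pmf of (D_{M+1}, (D_1,…,D_M), ψ)
    have hsnoc : ∀ (a : Fin T → 𝒳) (b : Fin M → Fin T → 𝒳) (x : Fin (M + 1) → Fin T → 𝒳),
        (x (Fin.last M) = a ∧ (fun j : Fin M => x j.castSucc) = b) ↔ x = Fin.snoc b a := by
      intro a b x
      constructor
      · rintro ⟨h1, h2⟩
        funext i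
        refine Fin.lastCases ?_ ?_ i
        · rw [Fin.snoc_last]; exact h1
        · intro j; rw [Fin.snoc_castSucc]; exact congrFun h2 j
      · rintro rfl
        exact ⟨Fin.snoc_last _ _, funext fun j => Fin.snoc_castSucc _ _ _⟩
    set F3 : Ψ × (Fin (M + 1) → Θ × (Fin T → 𝒳))
        → (Fin T → 𝒳) × ((Fin M → Fin T → 𝒳) × Ψ) :=
      fun g => ((g.2 (Fin.last M)).2, (fun j : Fin M => (g.2 j.castSucc).2, g.1)) with hF3def
    have hp3 : ∀ (a : Fin T → 𝒳) (b : Fin M → Fin T → 𝒳) (s : Ψ),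
        prob (fun ω => ((fun t : Fin T => X (Fin.last M) t ω), (D ω, ψ ω))) (a, (b, s))
          = prob ψ s * (κ2 s a * ∏ j, κ2 s (b j)) := by
      intro a b s
      have h := prob_comp_fiber hMG F3 (a, (b, s))
      have h0 : prob (fun ω => ((fun t : Fin T => X (Fin.last M) t ω), (D ω, ψ ω)))
          (a, (b, s)) = prob (fun ω => F3 (G ω)) (a, (b, s)) := rfl
      rw [h0, h, Fintype.sum_prod_type]
      have inner : ∀ s' : Ψ,
          (∑ v : Fin (M + 1) → Θ × (Fin T → 𝒳),
            if F3 (s', v) = (a, (b, s)) then prob G (s', v) else 0)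
          = if s' = s then prob ψ s * (κ2 s a * ∏ j, κ2 s (b j)) else 0 := by
        intro s'
        rw [← Equiv.sum_comp (Equiv.arrowProdEquivProdArrow (Fin (M + 1)) (fun _ => Θ) (fun _ => Fin T → 𝒳)).symm
          (fun v => if F3 (s', v) = (a, (b, s)) then prob G (s', v) else 0)]
        rw [Fintype.sum_prod_type]
        rw [Finset.sum_comm]
        have hcond : ∀ (w : Fin (M + 1) → Θ) (x : Fin (M + 1) → Fin T → 𝒳),
            (F3 (s', (Equiv.arrowProdEquivProdArrow (Fin (M + 1)) (fun _ => Θ) (fun _ => Fin T → 𝒳)).symm (w, x))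
              = (a, (b, s)))
            ↔ (x = Fin.snoc b a ∧ s' = s) := by
          intro w x
          have e0 : F3 (s', (Equiv.arrowProdEquivProdArrow (Fin (M + 1)) (fun _ => Θ)
              (fun _ => Fin T → 𝒳)).symm (w, x))
              = (x (Fin.last M), (fun j : Fin M => x j.castSucc, s')) := rfl
          rw [e0]
          simp only [Prod.ext_iff]
          constructor
          · rintro ⟨h1, h2, h3⟩
            exact ⟨(hsnoc a b x).1 ⟨h1, h2⟩, h3⟩
          · rintro ⟨hx, h3⟩
            obtain ⟨h1, h2⟩ := (hsnoc a b x).2 hx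
            exact ⟨h1, h2, h3⟩
        have hinner2 : ∀ x : Fin (M + 1) → Fin T → 𝒳,
            (∑ w : Fin (M + 1) → Θ,
              if F3 (s', (Equiv.arrowProdEquivProdArrow (Fin (M + 1)) (fun _ => Θ)
                  (fun _ => Fin T → 𝒳)).symm (w, x)) = (a, (b, s))
              then prob G (s', (Equiv.arrowProdEquivProdArrow (Fin (M + 1)) (fun _ => Θ)
                  (fun _ => Fin T → 𝒳)).symm (w, x)) else 0)
            = if (x = Fin.snoc b a ∧ s' = s)
              then prob ψ s' * ∏ m_1, κ2 s' (x m_1) else 0 := by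
          intro x
          by_cases hc : x = Fin.snoc b a ∧ s' = s
          · rw [if_pos hc]
            calc (∑ w : Fin (M + 1) → Θ, if F3 (s', (Equiv.arrowProdEquivProdArrow (Fin (M + 1))
                  (fun _ => Θ) (fun _ => Fin T → 𝒳)).symm (w, x)) = (a, (b, s))
                then prob G (s', (Equiv.arrowProdEquivProdArrow (Fin (M + 1)) (fun _ => Θ)
                  (fun _ => Fin T → 𝒳)).symm (w, x)) else 0)
                = ∑ w : Fin (M + 1) → Θ, prob ψ s' * ∏ m_1, κ s' (w m_1, x m_1) := by
                  refine Finset.sum_congr rfl fun w _ => ?_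
                  rw [if_pos ((hcond w x).2 hc)]
                  exact hκ s' _
              _ = prob ψ s' * ∑ w : Fin (M + 1) → Θ, ∏ m_1, κ s' (w m_1, x m_1) := by
                  rw [Finset.mul_sum]
              _ = prob ψ s' * ∏ m_1, κ2 s' (x m_1) := by rw [hprodsum s' x]
          · rw [if_neg hc]
            refine Finset.sum_eq_zero fun w _ => ?_
            rw [if_neg (fun hcc => hc ((hcond w x).1 hcc))]
        rw [Finset.sum_congr rfl fun x _ => hinner2 x]
        have hsplit : ∀ x : Fin (M + 1) → Fin T → 𝒳,
            (if (x = Fin.snoc b a ∧ s' = s)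
              then prob ψ s' * ∏ m_1, κ2 s' (x m_1) else 0)
            = if x = Fin.snoc b a
              then (if s' = s then prob ψ s' * ∏ m_1, κ2 s' (x m_1) else 0) else 0 := by
          intro x
          by_cases h1 : x = Fin.snoc b a <;> by_cases h2 : s' = s <;>
            simp [h1, h2]
        rw [Finset.sum_congr rfl fun x _ => hsplit x]
        rw [Finset.sum_ite_eq' Finset.univ (Fin.snoc b a)
          (fun x => if s' = s then prob ψ s' * ∏ m_1, κ2 s' (x m_1) else 0)]
        rw [if_pos (Finset.mem_univ _)]
        by_cases h2 : s' = s
        · rw [if_pos h2, if_pos h2, h2]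
          congr 1
          rw [Fin.prod_univ_castSucc]
          simp only [Fin.snoc_castSucc, Fin.snoc_last]
          ring
        · rw [if_neg h2, if_neg h2]
      rw [Finset.sum_congr rfl fun s' _ => inner s']
      rw [Finset.sum_ite_eq' Finset.univ s
        (fun _ => prob ψ s * (κ2 s a * ∏ j, κ2 s (b j)))]
      rw [if_pos (Finset.mem_univ _)]
    -- marginals
    have hpAS : ∀ (a : Fin T → 𝒳) (s : Ψ),
        prob (fun ω => ((fun t : Fin T => X (Fin.last M) t ω), ψ ω)) (a, s)
          = prob ψ s * κ2 s a := by
      intro a s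
      have h1 : prob (fun ω => ((fun t : Fin T => X (Fin.last M) t ω), ψ ω)) (a, s)
          = ∑ b, prob (fun ω => ((fun t : Fin T => X (Fin.last M) t ω), (D ω, ψ ω)))
              (a, (b, s)) := prob_marg_AZ hMDlast hMD hψ a s
      rw [h1, Finset.sum_congr rfl fun b _ => hp3 a b s]
      calc ∑ b : Fin M → Fin T → 𝒳, prob ψ s * (κ2 s a * ∏ j, κ2 s (b j))
          = prob ψ s * κ2 s a * ∑ b : Fin M → Fin T → 𝒳, ∏ j, κ2 s (b j) := by
            rw [Finset.mul_sum]
            exact Finset.sum_congr rfl fun b _ => by ring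
        _ = prob ψ s * κ2 s a := by rw [hrestsum s]; ring
    have hpBS : ∀ (b : Fin M → Fin T → 𝒳) (s : Ψ),
        prob (fun ω => (D ω, ψ ω)) (b, s) = prob ψ s * ∏ j, κ2 s (b j) := by
      intro b s
      have h1 : prob (fun ω => (D ω, ψ ω)) (b, s)
          = ∑ a, prob (fun ω => ((fun t : Fin T => X (Fin.last M) t ω), (D ω, ψ ω)))
              (a, (b, s)) := prob_marg_BZ hMDlast hMD hψ b s
      rw [h1, Finset.sum_congr rfl fun a _ => hp3 a b s]
      calc ∑ a : Fin T → 𝒳, prob ψ s * (κ2 s a * ∏ j, κ2 s (b j))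
          = prob ψ s * (∏ j, κ2 s (b j)) * ∑ a : Fin T → 𝒳, κ2 s a := by
            rw [Finset.mul_sum]
            exact Finset.sum_congr rfl fun a _ => by ring
        _ = prob ψ s * ∏ j, κ2 s (b j) := by rw [hκ2sum s]; ring
    have hCIfull : condMutualInfo (fun ω (t : Fin T) => X (Fin.last M) t ω) D ψ = 0 := by
      refine condMutualInfo_eq_zero_of_factor hMDlast hMD hψ ?_
      intro a b s
      show prob (fun ω => ((fun t : Fin T => X (Fin.last M) t ω), (D ω, ψ ω))) (a, (b, s))
          * prob ψ s
        = prob (fun ω => ((fun t : Fin T => X (Fin.last M) t ω), ψ ω)) (a, s)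
          * prob (fun ω => (D ω, ψ ω)) (b, s)
      rw [hp3 a b s, hpAS a s, hpBS b s]
      ring
    -- telescoping mutual information along the first M documents
    set Jf : ℕ → ℝ := fun m =>
      if hm : m ≤ M then mutualInfo (fun ω (j : Fin m) (t : Fin T) =>
        X (Fin.castLE (le_trans hm (Nat.le_succ M)) j) t ω) ψ else 0 with hJfdef
    have hJM : Jf M = mutualInfo D ψ := by
      have e : Jf M = mutualInfo (fun ω (j : Fin M) (t : Fin T) =>
          X (Fin.castLE (le_trans (le_refl M) (Nat.le_succ M)) j) t ω) ψ := by
        rw [hJfdef]; exact dif_pos (le_refl M)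
      rw [e]
      exact mi_congr_left (f := fun d : Fin M → Fin T → 𝒳 => d)
        (fun x y h => h) (fun ω => rfl)
    have hJ0 : Jf 0 = 0 := by
      have e : Jf 0 = mutualInfo (fun ω (j : Fin 0) (t : Fin T) =>
          X (Fin.castLE (le_trans (Nat.zero_le M) (Nat.le_succ M)) j) t ω) ψ := by
        rw [hJfdef]; exact dif_pos (Nat.zero_le M)
      rw [e]
      have hc : ∀ ω : Ω, (fun (j : Fin 0) (t : Fin T) =>
          X (Fin.castLE (le_trans (Nat.zero_le M) (Nat.le_succ M)) j) t ω)
          = (fun j : Fin 0 => j.elim0) := fun ω => funext fun j => j.elim0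
      have h1 : entropy (fun ω : Ω => ((fun (j : Fin 0) (t : Fin T) =>
          X (Fin.castLE (le_trans (Nat.zero_le M) (Nat.le_succ M)) j) t ω), ψ ω))
          = entropy ψ := by
        refine entropy_comp_inj (f := fun s : Ψ => ((fun j : Fin 0 => j.elim0), s))
          (fun x y h => congrArg Prod.snd h) (fun ω => ?_)
        rw [hc ω]
      have h2 : entropy (fun ω : Ω => (fun (j : Fin 0) (t : Fin T) =>
          X (Fin.castLE (le_trans (Nat.zero_le M) (Nat.le_succ M)) j) t ω)) = 0 := by
        rw [entropy_ext' hc]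
        exact entropy_const _
      rw [mutualInfo, h1, h2]
      ring
    -- one step of the chain
    have hstep : ∀ m, m < M →
        condMutualInfo (fun ω (t : Fin T) => X (Fin.last M) t ω) ψ D
          ≤ Jf (m + 1) - Jf m := by
      intro m hm
      set Dm : Ω → (Fin T → 𝒳) := fun ω t => X (⟨m, by omega⟩ : Fin (M + 1)) t ω with hDm
      set Cm : Ω → (Fin m → Fin T → 𝒳) :=
        fun ω (j : Fin m) (t : Fin T) => X (Fin.castLE (by omega : m ≤ M + 1) j) t ω
        with hCm
      have hMCm : Measurable Cm :=
        measurable_pi_lambda _ fun j => measurable_pi_lambda _ fun t => hX _ _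
      have hchain : Jf (m + 1) = Jf m + condMutualInfo Dm ψ Cm := by
        have e1 : Jf (m + 1) = mutualInfo (fun ω (j : Fin (m + 1)) (t : Fin T) =>
            X (Fin.castLE (le_trans (by omega : m + 1 ≤ M) (Nat.le_succ M)) j) t ω) ψ := by
          rw [hJfdef]; exact dif_pos (by omega)
        have e0 : Jf m = mutualInfo Cm ψ := by
          rw [hJfdef]; exact dif_pos (by omega)
        have esplit : mutualInfo (fun ω (j : Fin (m + 1)) (t : Fin T) =>
            X (Fin.castLE (le_trans (by omega : m + 1 ≤ M) (Nat.le_succ M)) j) t ω) ψ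
            = mutualInfo (fun ω => (Dm ω, Cm ω)) ψ := by
          symm
          refine mi_congr_left
            (f := fun v : Fin (m + 1) → Fin T → 𝒳 =>
              (v (Fin.last m), fun j : Fin m => v j.castSucc)) ?_ (fun ω => rfl)
          intro x y hxy
          simp only [Prod.ext_iff] at hxy
          obtain ⟨hl, hcs⟩ := hxy
          funext i
          refine Fin.lastCases ?_ ?_ i
          · exact hl
          · exact fun j => congrFun hcs j
        rw [e1, e0, esplit, mi_chain Dm Cm ψ]
      -- exchangeability: swap document m with document M
      have hexch : condMutualInfo Dm ψ Cm
          = condMutualInfo (fun ω (t : Fin T) => X (Fin.last M) t ω) ψ Cm := by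
        set σ : Equiv.Perm (Fin (M + 1)) :=
          Equiv.swap (⟨m, by omega⟩ : Fin (M + 1)) (Fin.last M) with hσdef
        have hσl : σ (Fin.last M) = (⟨m, by omega⟩ : Fin (M + 1)) :=
          Equiv.swap_apply_right _ _
        have hσj : ∀ j : Fin m, σ (Fin.castLE (by omega : m ≤ M + 1) j)
            = Fin.castLE (by omega : m ≤ M + 1) j := by
          intro j
          refine Equiv.swap_apply_of_ne_of_ne ?_ ?_
          · exact Fin.ne_of_val_ne (by have := j.isLt; simp; omega)
          · exact Fin.ne_of_val_ne (by have := j.isLt; simp; omega)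
        set F1 : Ψ × (Fin (M + 1) → Θ × (Fin T → 𝒳)) → (Fin T → 𝒳) × (Fin m → Fin T → 𝒳) :=
          fun g => ((g.2 (Fin.last M)).2,
            fun j : Fin m => (g.2 (Fin.castLE (by omega : m ≤ M + 1) j)).2) with hF1def
        set F2 : Ψ × (Fin (M + 1) → Θ × (Fin T → 𝒳))
            → (Fin T → 𝒳) × (Ψ × (Fin m → Fin T → 𝒳)) :=
          fun g => ((g.2 (Fin.last M)).2, (g.1,
            fun j : Fin m => (g.2 (Fin.castLE (by omega : m ≤ M + 1) j)).2)) with hF2def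
        have h1 : entropy (fun ω => (Dm ω, Cm ω))
            = entropy (fun ω => ((fun t : Fin T => X (Fin.last M) t ω), Cm ω)) := by
          calc entropy (fun ω => (Dm ω, Cm ω))
              = entropy (fun ω => F1 ((G ω).1, (G ω).2 ∘ σ)) := by
                refine entropy_ext' fun ω => ?_
                refine Prod.ext_iff.mpr ⟨?_, funext fun j => ?_⟩
                · exact (congrArg (fun i : Fin (M + 1) => ((G ω).2 i).2) hσl).symm
                · exact (congrArg (fun i : Fin (M + 1) => ((G ω).2 i).2) (hσj j)).symm
            _ = entropy (fun ω => F1 (G ω)) := entropy_comp_perm hMG σ (hswap_inv σ) F1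
            _ = entropy (fun ω => ((fun t : Fin T => X (Fin.last M) t ω), Cm ω)) :=
                entropy_ext' fun ω => rfl
        have h2 : entropy (fun ω => (Dm ω, (ψ ω, Cm ω)))
            = entropy (fun ω => ((fun t : Fin T => X (Fin.last M) t ω), (ψ ω, Cm ω))) := by
          calc entropy (fun ω => (Dm ω, (ψ ω, Cm ω)))
              = entropy (fun ω => F2 ((G ω).1, (G ω).2 ∘ σ)) := by
                refine entropy_ext' fun ω => ?_
                refine Prod.ext_iff.mpr ⟨?_, Prod.ext_iff.mpr ⟨rfl, funext fun j => ?_⟩⟩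
                · exact (congrArg (fun i : Fin (M + 1) => ((G ω).2 i).2) hσl).symm
                · exact (congrArg (fun i : Fin (M + 1) => ((G ω).2 i).2) (hσj j)).symm
            _ = entropy (fun ω => F2 (G ω)) := entropy_comp_perm hMG σ (hswap_inv σ) F2
            _ = entropy (fun ω => ((fun t : Fin T => X (Fin.last M) t ω), (ψ ω, Cm ω))) :=
                entropy_ext' fun ω => rfl
        have hA : condMutualInfo Dm ψ Cm
            = entropy (fun ω => (Dm ω, Cm ω)) + entropy (fun ω => (ψ ω, Cm ω))
              - entropy (fun ω => (Dm ω, (ψ ω, Cm ω))) - entropy Cm := rfl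
        have hB : condMutualInfo (fun ω (t : Fin T) => X (Fin.last M) t ω) ψ Cm
            = entropy (fun ω => ((fun t : Fin T => X (Fin.last M) t ω), Cm ω))
              + entropy (fun ω => (ψ ω, Cm ω))
              - entropy (fun ω => ((fun t : Fin T => X (Fin.last M) t ω), (ψ ω, Cm ω)))
              - entropy Cm := rfl
        rw [hA, hB, h1, h2]
      -- conditional independence given ψ (restriction of the full one)
      have hCICm : condMutualInfo (fun ω (t : Fin T) => X (Fin.last M) t ω) Cm ψ = 0 := by
        have hle : condMutualInfo (fun ω (t : Fin T) => X (Fin.last M) t ω) Cm ψ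
            ≤ condMutualInfo (fun ω (t : Fin T) => X (Fin.last M) t ω) D ψ :=
          cmi_dpi_right (g := fun d : Fin M → Fin T → 𝒳 =>
              fun j : Fin m => d (Fin.castLE (by omega : m ≤ M) j))
            (fun ω => rfl) hMDlast hMD hψ
        rw [hCIfull] at hle
        exact le_antisymm hle (condMutualInfo_nonneg hMDlast hMCm hψ)
      have hCID : condMutualInfo (fun ω (t : Fin T) => X (Fin.last M) t ω) D ψ = 0 :=
        hCIfull
      have hiii : condMutualInfo (fun ω (t : Fin T) => X (Fin.last M) t ω) ψ Cm
          = mutualInfo (fun ω (t : Fin T) => X (Fin.last M) t ω) ψ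
            - mutualInfo (fun ω (t : Fin T) => X (Fin.last M) t ω) Cm := by
        have hid := mi_cmi_identity (fun ω (t : Fin T) => X (Fin.last M) t ω) ψ Cm
        rw [hCICm] at hid
        linarith
      have hiiiM : condMutualInfo (fun ω (t : Fin T) => X (Fin.last M) t ω) ψ D
          = mutualInfo (fun ω (t : Fin T) => X (Fin.last M) t ω) ψ
            - mutualInfo (fun ω (t : Fin T) => X (Fin.last M) t ω) D := by
        have hid := mi_cmi_identity (fun ω (t : Fin T) => X (Fin.last M) t ω) ψ D
        rw [hCID] at hid
        linarith
      have hiv : mutualInfo (fun ω (t : Fin T) => X (Fin.last M) t ω) Cm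
          ≤ mutualInfo (fun ω (t : Fin T) => X (Fin.last M) t ω) D :=
        mi_dpi_right (g := fun d : Fin M → Fin T → 𝒳 =>
            fun j : Fin m => d (Fin.castLE (by omega : m ≤ M) j))
          (fun ω => rfl) hMDlast hMD
      linarith [hchain, hexch, hiii, hiiiM, hiv]
    calc (M : ℝ) * condMutualInfo (fun ω (t : Fin T) => X (Fin.last M) t ω) ψ D
        = ∑ _m ∈ Finset.range M,
            condMutualInfo (fun ω (t : Fin T) => X (Fin.last M) t ω) ψ D := by
          rw [Finset.sum_const, Finset.card_range, nsmul_eq_mul]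
      _ ≤ ∑ m ∈ Finset.range M, (Jf (m + 1) - Jf m) :=
          Finset.sum_le_sum fun m hm => hstep m (Finset.mem_range.mp hm)
      _ = Jf M - Jf 0 := Finset.sum_range_sub Jf M
      _ = mutualInfo D ψ := by rw [hJM, hJ0]; ring
  -- final assembly
  have hτpos : (0:ℝ) < τ := by exact_mod_cast hτ1
  have hMpos : (0:ℝ) < M := by exact_mod_cast hM
  have hcore : condEntropy W D ≤ condEntropy W (θ (Fin.last M))
      + mutualInfo D ψ / M + condMutualInfo W (θ (Fin.last M)) ψ := by
    have h5 : condMutualInfo (fun ω (t : Fin T) => X (Fin.last M) t ω) ψ D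
        ≤ mutualInfo D ψ / M := by
      rw [le_div_iff₀ hMpos] at *
      linarith [hstep5]
    linarith [halg1, hWtheta, hCIW, hWpsi, hdpiW, h5]
  rw [hsum1]
  rw [div_add_div _ _ (ne_of_gt hτpos) (ne_of_gt (mul_pos hMpos hτpos))]
  calc (1 / (τ:ℝ)) * condEntropy W D
      ≤ (1 / (τ:ℝ)) * (condEntropy W (θ (Fin.last M))
        + mutualInfo D ψ / M + condMutualInfo W (θ (Fin.last M)) ψ) := by
        apply mul_le_mul_of_nonneg_left hcore
        positivity
    _ = _ := by
        field_simp
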